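/- Under the SPEG+ iteration with r > 1 and 0 < D ≤ (r−1)/L, for every solution z* (i.e. z* ∈ C and ⟨F(z*), z − z*⟩ ≥ 0 for all z ∈ C) the following hold: (i) for all k ≥ 1, (1/(2L) − D/(2(r−1)))·k²·‖F(z_k) + C̃_k‖² ≤ ((r³ − r²)/(2D))·‖z_0 − z*‖²; (ii) for all k ≥ 1, Drk·⟨F(z_k) + C̃_k, z_k − z*⟩ ≤ ((r³ − r²)/2)·‖z_0 − z*‖²; (iii) ∑_{k=0}^∞ (1/2)·((r−1)/L − D)·(2k + r + 1)·‖F(z_{k+1}) + C̃_{k+1}‖² ≤ ((r³ − r²)/(2D))·‖z_0 − z*‖²; (iv) ∑_{k=0}^∞ ((k+r)²/(2L))·‖C̃_{k+1/2} − (k/(k+r))·C̃_k‖² ≤ ((r³ − r²)/(2D))·‖z_0 − z*‖². In particular, if D < (r−1)/L then ‖F(z_k) + C̃_k‖² ≤ r²(r−1)² / ((((r−1)/L)·D − D²)·k²)·‖z_0 − z*‖² and ⟨F(z_k) + C̃_k, z_k − z*⟩ ≤ ((r² − r)/(2Dk))·‖z_0 − z*‖² for all k ≥ 1. -/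

import Mathlib

set_option maxHeartbeats 1000000

open RealInnerProductSpace

lemma descent_core {H : Type*} [NormedAddCommGroup H] [InnerProductSpace ℝ H]
    (a r D L al la de ga : ℝ)
    (ha : 0 ≤ a) (hr : 1 < r) (hL : 0 < L) (hD0 : 0 < D)
    (hal : al*(a+r) = a) (hla : la*L = 1) (hde : de*r = D) (hga : 2*D*ga = r^2*(r-1))
    (x u x1 u1 y f0 fh f1 c0 ch c1 fs : H)
    (hx1 : x1 = al • x + (1-al) • u - la • (fh + c1))
    (hy : y = al • x + (1-al) • u - la • (al • f0 + ch))
    (hu1 : u1 = u - de • (f1 + c1))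
    (hT1 : 0 ≤ ⟪f1 - f0, x1 - x⟫) (hPh1 : 0 ≤ ⟪ch, y - x1⟫) (hP1s : 0 ≤ ⟪c1, x1⟫)
    (hP1k : 0 ≤ ⟪c1, x1 - x⟫) (hP0h : 0 ≤ ⟪c0, x - y⟫) (hZ1 : 0 ≤ ⟪fs, x1⟫)
    (hM1 : 0 ≤ ⟪f1 - fs, x1⟫) (hQn : ‖f1 - fh‖ ≤ ‖al • f0 + ch - fh - c1‖) :
    ((a+1)^2*la/2) * ‖f1 + c1‖^2 + r*(a+1) * ⟪f1 + c1, x1 - u1⟫ + ga * ‖u1‖^2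
      + ((1/2) * ((r-1)*la - D) * (2*a+r+1) * ‖f1 + c1‖^2
         + ((a+r)^2*la/2) * ‖ch - al • c0‖^2)
    ≤ (a^2*la/2) * ‖f0 + c0‖^2 + r*a * ⟪f0 + c0, x - u⟫ + ga * ‖u‖^2 := by
  have hr0 : (0:ℝ) < r := lt_trans one_pos hr
  have hs0 : (0:ℝ) < a + r := by linarith
  have hla0 : 0 ≤ la := by
    by_contra hc
    push_neg at hc
    nlinarith
  have hM0 : (2*r^2*D*(a+r)^2 : ℝ) ≠ 0 := by positivity
  have hQ2 : ‖f1 - fh‖^2 ≤ ‖al • f0 + ch - fh - c1‖^2 := by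
    apply pow_le_pow_left₀ (norm_nonneg _) hQn
  have key : (2*r^2*D*(a+r)^2) * (((a^2*la/2) * ‖f0 + c0‖^2 + r*a * ⟪f0 + c0, x - u⟫ + ga * ‖u‖^2)
      - (((a+1)^2*la/2) * ‖f1 + c1‖^2 + r*(a+1) * ⟪f1 + c1, x1 - u1⟫ + ga * ‖u1‖^2
      + ((1/2) * ((r-1)*la - D) * (2*a+r+1) * ‖f1 + c1‖^2
         + ((a+r)^2*la/2) * ‖ch - al • c0‖^2)))
      = (2*r^2*D*(a+r)^2) * (a*(a+r) * ⟪f1 - f0, x1 - x⟫ + (a+r)^2 * ⟪ch, y - x1⟫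
        + r*(r-1) * ⟪c1, x1⟫ + a*(a+r) * ⟪c1, x1 - x⟫ + a*(a+r) * ⟪c0, x - y⟫
        + r*(r-1) * ⟪fs, x1⟫ + r*(r-1) * ⟪f1 - fs, x1⟫
        + ((a+r)^2*la/2) * (‖al • f0 + ch - fh - c1‖^2 - ‖f1 - fh‖^2)) := by
    subst hx1 hy hu1
    simp only [← real_inner_self_eq_norm_sq]
    simp only [inner_sub_left, inner_sub_right, inner_add_left, inner_add_right,
      real_inner_smul_left, real_inner_smul_right]
    simp only [real_inner_comm x u, real_inner_comm x f0, real_inner_comm x fh, real_inner_comm x f1, real_inner_comm x c0, real_inner_comm x ch, real_inner_comm x c1, real_inner_comm x fs, real_inner_comm u f0, real_inner_comm u fh, real_inner_comm u f1, real_inner_comm u c0, real_inner_comm u ch, real_inner_comm u c1, real_inner_comm u fs, real_inner_comm f0 fh, real_inner_comm f0 f1, real_inner_comm f0 c0, real_inner_comm f0 ch, real_inner_comm f0 c1, real_inner_comm f0 fs, real_inner_comm fh f1, real_inner_comm fh c0, real_inner_comm fh ch, real_inner_comm fh c1, real_inner_comm fh fs, real_inner_comm f1 c0, real_inner_comm f1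 ch, real_inner_comm f1 c1, real_inner_comm f1 fs, real_inner_comm c0 ch, real_inner_comm c0 c1, real_inner_comm c0 fs, real_inner_comm ch c1, real_inner_comm ch fs, real_inner_comm c1 fs]
    linear_combination ((2 : ℝ)*r^5*D*⟪u, c1⟫ + (2 : ℝ)*r^5*D*⟪u, f1⟫ + (-2 : ℝ)*r^5*D*⟪x, c1⟫ + (-2 : ℝ)*r^5*D*⟪x, f1⟫ + (2 : ℝ)*r^5*D*la*⟪c0, ch⟫ + (2 : ℝ)*r^5*D*la*⟪f0, c1⟫ + (2 : ℝ)*r^5*D*la*⟪f0, fh⟫ + (-1 : ℝ)*r^5*D*al*la*⟪c0, c0⟫ + (-1 : ℝ)*r^5*D*al*la*⟪f0, f0⟫ + (6 : ℝ)*a*r^4*D*⟪u, c1⟫ + (-2 : ℝ)*a*r^4*D*⟪u, c0⟫ + (6 : ℝ)*a*r^4*D*⟪u, f1⟫ + (-2 : ℝ)*a*r^4*D*⟪u, f0⟫ + (-6 : ℝ)*a*r^4*D*⟪x, c1⟫ + (2 : ℝ)*a*r^4*D*⟪x, c0⟫ + (-6 : ℝ)*a*r^4*D*⟪x, f1⟫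 + (2 : ℝ)*a*r^4*D*⟪x, f0⟫ + (6 : ℝ)*a*r^4*D*la*⟪c0, ch⟫ + (-1 : ℝ)*a*r^4*D*la*⟪c0, c0⟫ + (6 : ℝ)*a*r^4*D*la*⟪f0, c1⟫ + (-2 : ℝ)*a*r^4*D*la*⟪f0, c0⟫ + (6 : ℝ)*a*r^4*D*la*⟪f0, fh⟫ + (-1 : ℝ)*a*r^4*D*la*⟪f0, f0⟫ + (-3 : ℝ)*a*r^4*D*al*la*⟪c0, c0⟫ + (-3 : ℝ)*a*r^4*D*al*la*⟪f0, f0⟫ + (6 : ℝ)*a^2*r^3*D*⟪u, c1⟫ + (-4 : ℝ)*a^2*r^3*D*⟪u, c0⟫ + (6 : ℝ)*a^2*r^3*D*⟪u, f1⟫ + (-4 : ℝ)*a^2*r^3*D*⟪u, f0⟫ + (-6 : ℝ)*a^2*r^3*D*⟪x, c1⟫ + (4 : ℝ)*a^2*r^3*D*⟪x, c0⟫ + (-6 : ℝ)*a^2*r^3*D*⟪x, f1⟫ + (4 : ℝ)*a^2*r^3*D*⟪x, f0⟫ + (6 : ℝ)*a^2*r^3*D*la*⟪c0, ch⟫ +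 (-2 : ℝ)*a^2*r^3*D*la*⟪c0, c0⟫ + (6 : ℝ)*a^2*r^3*D*la*⟪f0, c1⟫ + (-4 : ℝ)*a^2*r^3*D*la*⟪f0, c0⟫ + (6 : ℝ)*a^2*r^3*D*la*⟪f0, fh⟫ + (-2 : ℝ)*a^2*r^3*D*la*⟪f0, f0⟫ + (-3 : ℝ)*a^2*r^3*D*al*la*⟪c0, c0⟫ + (-3 : ℝ)*a^2*r^3*D*al*la*⟪f0, f0⟫ + (2 : ℝ)*a^3*r^2*D*⟪u, c1⟫ + (-2 : ℝ)*a^3*r^2*D*⟪u, c0⟫ + (2 : ℝ)*a^3*r^2*D*⟪u, f1⟫ + (-2 : ℝ)*a^3*r^2*D*⟪u, f0⟫ + (-2 : ℝ)*a^3*r^2*D*⟪x, c1⟫ + (2 : ℝ)*a^3*r^2*D*⟪x, c0⟫ + (-2 : ℝ)*a^3*r^2*D*⟪x, f1⟫ + (2 : ℝ)*a^3*r^2*D*⟪x, f0⟫ + (2 : ℝ)*a^3*r^2*D*la*⟪c0, ch⟫ + (-1 : ℝ)*a^3*r^2*D*la*⟪c0, c0⟫ + (2 : ℝ)*a^3*r^2*D*la*⟪f0,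 c1⟫ + (-2 : ℝ)*a^3*r^2*D*la*⟪f0, c0⟫ + (2 : ℝ)*a^3*r^2*D*la*⟪f0, fh⟫ + (-1 : ℝ)*a^3*r^2*D*la*⟪f0, f0⟫ + (-1 : ℝ)*a^3*r^2*D*al*la*⟪c0, c0⟫ + (-1 : ℝ)*a^3*r^2*D*al*la*⟪f0, f0⟫) * hal + ((-2 : ℝ)*r^2*D^2*ga*⟪c1, c1⟫ + (-4 : ℝ)*r^2*D^2*ga*⟪f1, c1⟫ + (-2 : ℝ)*r^2*D^2*ga*⟪f1, f1⟫ + (4 : ℝ)*r^3*D*ga*⟪u, c1⟫ + (4 : ℝ)*r^3*D*ga*⟪u, f1⟫ + (-2 : ℝ)*r^3*D*de*ga*⟪c1, c1⟫ + (-4 : ℝ)*r^3*D*de*ga*⟪f1, c1⟫ + (-2 : ℝ)*r^3*D*de*ga*⟪f1, f1⟫ + (-2 : ℝ)*r^4*D*⟪c1, c1⟫ + (-4 : ℝ)*r^4*D*⟪f1, c1⟫ + (-2 : ℝ)*r^4*D*⟪f1, f1⟫ + (-4 : ℝ)*a*r*D^2*ga*⟪c1, c1⟫ + (-8 : ℝ)*a*r*D^2*ga*⟪f1,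 c1⟫ + (-4 : ℝ)*a*r*D^2*ga*⟪f1, f1⟫ + (8 : ℝ)*a*r^2*D*ga*⟪u, c1⟫ + (8 : ℝ)*a*r^2*D*ga*⟪u, f1⟫ + (-4 : ℝ)*a*r^2*D*de*ga*⟪c1, c1⟫ + (-8 : ℝ)*a*r^2*D*de*ga*⟪f1, c1⟫ + (-4 : ℝ)*a*r^2*D*de*ga*⟪f1, f1⟫ + (-4 : ℝ)*a*r^3*D*⟪c1, c1⟫ + (-8 : ℝ)*a*r^3*D*⟪f1, c1⟫ + (-4 : ℝ)*a*r^3*D*⟪f1, f1⟫ + (-2 : ℝ)*a*r^4*D*⟪c1, c1⟫ + (-4 : ℝ)*a*r^4*D*⟪f1, c1⟫ + (-2 : ℝ)*a*r^4*D*⟪f1, f1⟫ + (-2 : ℝ)*a^2*D^2*ga*⟪c1, c1⟫ + (-4 : ℝ)*a^2*D^2*ga*⟪f1, c1⟫ + (-2 : ℝ)*a^2*D^2*ga*⟪f1, f1⟫ + (4 : ℝ)*a^2*r*D*ga*⟪u, c1⟫ + (4 : ℝ)*a^2*r*D*ga*⟪u, f1⟫ + (-2 : ℝ)*a^2*r*D*de*ga*⟪c1,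 c1⟫ + (-4 : ℝ)*a^2*r*D*de*ga*⟪f1, c1⟫ + (-2 : ℝ)*a^2*r*D*de*ga*⟪f1, f1⟫ + (-2 : ℝ)*a^2*r^2*D*⟪c1, c1⟫ + (-4 : ℝ)*a^2*r^2*D*⟪f1, c1⟫ + (-2 : ℝ)*a^2*r^2*D*⟪f1, f1⟫ + (-4 : ℝ)*a^2*r^3*D*⟪c1, c1⟫ + (-8 : ℝ)*a^2*r^3*D*⟪f1, c1⟫ + (-4 : ℝ)*a^2*r^3*D*⟪f1, f1⟫ + (-2 : ℝ)*a^3*r^2*D*⟪c1, c1⟫ + (-4 : ℝ)*a^3*r^2*D*⟪f1, c1⟫ + (-2 : ℝ)*a^3*r^2*D*⟪f1, f1⟫) * hde + ((-1 : ℝ)*r^2*D^2*⟪c1, c1⟫ + (-2 : ℝ)*r^2*D^2*⟪f1, c1⟫ + (-1 : ℝ)*r^2*D^2*⟪f1, f1⟫ + (2 : ℝ)*r^3*D*⟪u, c1⟫ + (2 : ℝ)*r^3*D*⟪u, f1⟫ + (-2 : ℝ)*a*r*D^2*⟪c1, c1⟫ + (-4 : ℝ)*a*r*D^2*⟪f1,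 c1⟫ + (-2 : ℝ)*a*r*D^2*⟪f1, f1⟫ + (4 : ℝ)*a*r^2*D*⟪u, c1⟫ + (4 : ℝ)*a*r^2*D*⟪u, f1⟫ + (-1 : ℝ)*a^2*D^2*⟪c1, c1⟫ + (-2 : ℝ)*a^2*D^2*⟪f1, c1⟫ + (-1 : ℝ)*a^2*D^2*⟪f1, f1⟫ + (2 : ℝ)*a^2*r*D*⟪u, c1⟫ + (2 : ℝ)*a^2*r*D*⟪u, f1⟫) * hga
  have key2 : ((a^2*la/2) * ‖f0 + c0‖^2 + r*a * ⟪f0 + c0, x - u⟫ + ga * ‖u‖^2) - (((a+1)^2*la/2) * ‖f1 + c1‖^2 + r*(a+1) * ⟪f1 + c1, x1 - u1⟫ + ga * ‖u1‖^2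
      + ((1/2) * ((r-1)*la - D) * (2*a+r+1) * ‖f1 + c1‖^2
         + ((a+r)^2*la/2) * ‖ch - al • c0‖^2)) = a*(a+r) * ⟪f1 - f0, x1 - x⟫ + (a+r)^2 * ⟪ch, y - x1⟫
        + r*(r-1) * ⟪c1, x1⟫ + a*(a+r) * ⟪c1, x1 - x⟫ + a*(a+r) * ⟪c0, x - y⟫
        + r*(r-1) * ⟪fs, x1⟫ + r*(r-1) * ⟪f1 - fs, x1⟫
        + ((a+r)^2*la/2) * (‖al • f0 + ch - fh - c1‖^2 - ‖f1 - fh‖^2) := by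
    exact mul_left_cancel₀ hM0 key
  have pos : (0:ℝ) ≤ a*(a+r) * ⟪f1 - f0, x1 - x⟫ + (a+r)^2 * ⟪ch, y - x1⟫
        + r*(r-1) * ⟪c1, x1⟫ + a*(a+r) * ⟪c1, x1 - x⟫ + a*(a+r) * ⟪c0, x - y⟫
        + r*(r-1) * ⟪fs, x1⟫ + r*(r-1) * ⟪f1 - fs, x1⟫
        + ((a+r)^2*la/2) * (‖al • f0 + ch - fh - c1‖^2 - ‖f1 - fh‖^2) := by
    have h1 : (0:ℝ) ≤ a*(a+r) := by positivity
    have h2 : (0:ℝ) ≤ (a+r)^2 := sq_nonneg _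
    have h3 : (0:ℝ) ≤ r*(r-1) := by nlinarith
    have h4 : (0:ℝ) ≤ ((a+r)^2*la/2) * (‖al • f0 + ch - fh - c1‖^2 - ‖f1 - fh‖^2) := by
      apply mul_nonneg (by positivity) (by linarith)
    have := mul_nonneg h1 hT1
    have := mul_nonneg h2 hPh1
    have := mul_nonneg h3 hP1s
    have := mul_nonneg h1 hP1k
    have := mul_nonneg h1 hP0h
    have := mul_nonneg h3 hZ1
    have := mul_nonneg h3 hM1
    linarith
  linarith

/-- Convergence rates of the Symplectic Projected Extra-Gradient+ (SPEG+) method. -/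
theorem speg_convergence_rate
    {H : Type*} [NormedAddCommGroup H] [InnerProductSpace ℝ H] [CompleteSpace H]
    (L r D : ℝ) (F : H → H) (C : Set H)
    (z zh zt u Ct Ch : ℕ → H)
    (hL : 0 < L)
    (hLip : ∀ x y : H, ‖F x - F y‖ ≤ L * ‖x - y‖)
    (hmono : ∀ x y : H, 0 ≤ ⟪F x - F y, x - y⟫)
    (hCne : C.Nonempty) (hCclosed : IsClosed C) (hCconv : Convex ℝ C)
    (hr : 1 < r) (hD0 : 0 < D) (hD : D ≤ (r - 1)/L)
    (hz0 : z 0 ∈ C) (hu0 : u 0 = z 0) (hC0 : Ct 0 = 0)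
    (hzt : ∀ k : ℕ, zt (k+1) = ((k : ℝ)/((k : ℝ) + r)) • z k + (r/((k : ℝ) + r)) • u k)
    (hzhC : ∀ k : ℕ, zh k ∈ C)
    (hCh : ∀ k : ℕ, Ch k = L • (zt (k+1) - zh k) - ((k : ℝ)/((k : ℝ) + r)) • F (z k))
    (hChproj : ∀ k : ℕ, ∀ w ∈ C, ⟪Ch k, w - zh k⟫ ≤ 0)
    (hzC : ∀ k : ℕ, z (k+1) ∈ C)
    (hCt : ∀ k : ℕ, Ct (k+1) = L • (zt (k+1) - z (k+1)) - F (zh k))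
    (hCtproj : ∀ k : ℕ, ∀ w ∈ C, ⟪Ct (k+1), w - z (k+1)⟫ ≤ 0)
    (hu : ∀ k : ℕ, u (k+1) = u k - (D/r) • (F (z (k+1)) + Ct (k+1)))
    (zs : H) (hzsC : zs ∈ C) (hzs : ∀ w ∈ C, 0 ≤ ⟪F zs, w - zs⟫) :
    (∀ k : ℕ, 1 ≤ k →
      (1/(2*L) - D/(2*(r-1))) * (k : ℝ)^2 * ‖F (z k) + Ct k‖^2
        ≤ (r^3 - r^2)/(2*D) * ‖z 0 - zs‖^2) ∧
    (∀ k : ℕ, 1 ≤ k →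
      D*r*(k : ℝ) * ⟪F (z k) + Ct k, z k - zs⟫ ≤ (r^3 - r^2)/2 * ‖z 0 - zs‖^2) ∧
    (∀ n : ℕ, ∑ k ∈ Finset.range n,
        (1/2) * ((r - 1)/L - D) * (2*(k : ℝ) + r + 1) * ‖F (z (k+1)) + Ct (k+1)‖^2
        ≤ (r^3 - r^2)/(2*D) * ‖z 0 - zs‖^2) ∧
    (∀ n : ℕ, ∑ k ∈ Finset.range n,
        (((k : ℝ) + r)^2/(2*L)) * ‖Ch k - ((k : ℝ)/((k : ℝ) + r)) • Ct k‖^2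
        ≤ (r^3 - r^2)/(2*D) * ‖z 0 - zs‖^2) ∧
    (D < (r - 1)/L → ∀ k : ℕ, 1 ≤ k →
      ‖F (z k) + Ct k‖^2
        ≤ r^2*(r-1)^2 / ((((r - 1)/L) * D - D^2) * (k : ℝ)^2) * ‖z 0 - zs‖^2 ∧
      ⟪F (z k) + Ct k, z k - zs⟫ ≤ (r^2 - r)/(2*D*(k : ℝ)) * ‖z 0 - zs‖^2) := by
  have hr0 : (0:ℝ) < r := lt_trans one_pos hr
  have hL0 : L ≠ 0 := ne_of_gt hL
  have hr0' : r ≠ 0 := ne_of_gt hr0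
  have hD0' : D ≠ 0 := ne_of_gt hD0
  have hrm1 : (0:ℝ) < r - 1 := by linarith
  have hDL : D * L ≤ r - 1 := (le_div_iff₀ hL).mp hD
  have hBnn : (0:ℝ) ≤ 1/(2*L) - D/(2*(r-1)) := by
    rw [sub_nonneg, div_le_div_iff₀ (by linarith) (by linarith)]
    nlinarith
  -- V : Lyapunov function
  obtain ⟨V, hVdef⟩ : ∃ V : ℕ → ℝ, V = fun (k : ℕ) => ((k:ℝ)^2*(1/L)/2) * ‖F (z k) + Ct k‖^2
      + r*(k:ℝ) * ⟪F (z k) + Ct k, (z k - zs) - (u k - zs)⟫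
      + (r^2*(r-1)/(2*D)) * ‖u k - zs‖^2 := ⟨_, rfl⟩
  -- membership for all k
  have hzAll : ∀ k : ℕ, z k ∈ C := by
    intro k
    cases k with
    | zero => exact hz0
    | succ n => exact hzC n
  have hCtAll : ∀ k : ℕ, ∀ w ∈ C, ⟪Ct k, w - z k⟫ ≤ 0 := by
    intro k
    cases k with
    | zero => intro w _; rw [hC0]; simp
    | succ n => exact hCtproj n
  -- nonnegativity of ⟪g k, z k - zs⟫
  have hgzpos : ∀ k : ℕ, 0 ≤ ⟪F (z k) + Ct k, z k - zs⟫ := by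
    intro k
    have h1 := hmono (z k) zs
    have h2 := hzs (z k) (hzAll k)
    have h3 := hCtAll k zs hzsC
    have h4 : ⟪Ct k, zs - z k⟫ = -⟪Ct k, z k - zs⟫ := by
      rw [show zs - z k = -(z k - zs) by abel, inner_neg_right]
    have h5 : ⟪F (z k) + Ct k, z k - zs⟫
        = ⟪F (z k) - F zs, z k - zs⟫ + ⟪F zs, z k - zs⟫ + ⟪Ct k, z k - zs⟫ := by
      simp only [inner_add_left, inner_sub_left]; ring
    linarith
  -- lower bound for V
  have hVlb : ∀ k : ℕ, (1/(2*L) - D/(2*(r-1))) * (k:ℝ)^2 * ‖F (z k) + Ct k‖^2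
      + r*(k:ℝ) * ⟪F (z k) + Ct k, z k - zs⟫ ≤ V k := by
    intro k
    have hid : ((k:ℝ)^2*(1/L)/2) * ‖F (z k) + Ct k‖^2
        + r*(k:ℝ) * ⟪F (z k) + Ct k, (z k - zs) - (u k - zs)⟫
        + (r^2*(r-1)/(2*D)) * ‖u k - zs‖^2
        = (1/(2*L) - D/(2*(r-1))) * (k:ℝ)^2 * ‖F (z k) + Ct k‖^2
          + r*(k:ℝ) * ⟪F (z k) + Ct k, z k - zs⟫
          + (r^2*(r-1)/(2*D)) * ‖(u k - zs) - ((D*(k:ℝ))/(r*(r-1))) • (F (z k) + Ct k)‖^2 := by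
      simp only [← real_inner_self_eq_norm_sq]
      simp only [inner_sub_left, inner_sub_right, inner_add_left, inner_add_right,
        real_inner_smul_left, real_inner_smul_right]
      simp only [real_inner_comm (F (z k)) (Ct k), real_inner_comm (F (z k)) (z k),
        real_inner_comm (F (z k)) (zs), real_inner_comm (F (z k)) (u k),
        real_inner_comm (Ct k) (z k), real_inner_comm (Ct k) (zs), real_inner_comm (Ct k) (u k),
        real_inner_comm (z k) (zs), real_inner_comm (z k) (u k), real_inner_comm (zs) (u k)]
      field_simp
      ring
    have hsq : (0:ℝ) ≤ (r^2*(r-1)/(2*D))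
        * ‖(u k - zs) - ((D*(k:ℝ))/(r*(r-1))) • (F (z k) + Ct k)‖^2 := by positivity
    simp only [hVdef]
    linarith [hid, hsq]
  have hVnn : ∀ k : ℕ, 0 ≤ V k := by
    intro k
    have h1 := hVlb k
    have h2 := hgzpos k
    have h3 : (0:ℝ) ≤ (1/(2*L) - D/(2*(r-1))) * (k:ℝ)^2 * ‖F (z k) + Ct k‖^2 := by
      apply mul_nonneg (mul_nonneg hBnn (sq_nonneg _)) (sq_nonneg _)
    have h4 : (0:ℝ) ≤ r*(k:ℝ) * ⟪F (z k) + Ct k, z k - zs⟫ := by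
      apply mul_nonneg (mul_nonneg (le_of_lt hr0) (Nat.cast_nonneg k)) h2
    linarith
  have hV0 : V 0 = (r^3 - r^2)/(2*D) * ‖z 0 - zs‖^2 := by
    simp only [hVdef, Nat.cast_zero, hu0]
    ring
  -- main descent inequality
  have descent : ∀ k : ℕ, V (k+1)
      + ((1/2) * ((r - 1)/L - D) * (2*(k:ℝ) + r + 1) * ‖F (z (k+1)) + Ct (k+1)‖^2
        + (((k:ℝ) + r)^2/(2*L)) * ‖Ch k - ((k:ℝ)/((k:ℝ) + r)) • Ct k‖^2) ≤ V k := by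
    intro k
    have ha : (0:ℝ) ≤ (k:ℝ) := Nat.cast_nonneg k
    have hs0 : (0:ℝ) < (k:ℝ) + r := by linarith
    have hs0' : ((k:ℝ) + r) ≠ 0 := ne_of_gt hs0
    have hal : ((k:ℝ)/((k:ℝ)+r))*((k:ℝ)+r) = (k:ℝ) := div_mul_cancel₀ _ hs0'
    have hla : (1/L)*L = 1 := one_div_mul_cancel hL0
    have hde : (D/r)*r = D := div_mul_cancel₀ _ hr0'
    have hga : 2*D*(r^2*(r-1)/(2*D)) = r^2*(r-1) := by
      rw [mul_div_assoc']
      exact mul_div_cancel_left₀ _ (by positivity)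
    -- vector identities
    have hLzt : L • (zt (k+1) - z (k+1)) = F (zh k) + Ct (k+1) := by
      rw [hCt k]; abel
    have hz1 : z (k+1) = zt (k+1) - (1/L) • (F (zh k) + Ct (k+1)) := by
      rw [← hLzt, smul_smul, one_div_mul_cancel hL0, one_smul]; abel
    have hLzh : L • (zt (k+1) - zh k) = ((k:ℝ)/((k:ℝ)+r)) • F (z k) + Ch k := by
      rw [hCh k]; abel
    have hzh1 : zh k = zt (k+1) - (1/L) • (((k:ℝ)/((k:ℝ)+r)) • F (z k) + Ch k) := by
      rw [← hLzh, smul_smul, one_div_mul_cancel hL0, one_smul]; abel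
    have hzt1 : zt (k+1) - zs = ((k:ℝ)/((k:ℝ)+r)) • (z k - zs)
        + (1 - (k:ℝ)/((k:ℝ)+r)) • (u k - zs) := by
      rw [hzt k]
      have h1 : 1 - (k:ℝ)/((k:ℝ)+r) = r/((k:ℝ)+r) := by field_simp; ring
      rw [h1, smul_sub, smul_sub]
      have h2 : ((k:ℝ)/((k:ℝ)+r)) • zs + (r/((k:ℝ)+r)) • zs = zs := by
        rw [← add_smul]
        have : (k:ℝ)/((k:ℝ)+r) + r/((k:ℝ)+r) = 1 := by field_simp
        rw [this, one_smul]
      calc ((k:ℝ)/((k:ℝ)+r)) • z k + (r/((k:ℝ)+r)) • u k - zs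
          = ((k:ℝ)/((k:ℝ)+r)) • z k - ((k:ℝ)/((k:ℝ)+r)) • zs
            + ((r/((k:ℝ)+r)) • u k - (r/((k:ℝ)+r)) • zs) := by
            rw [show ((k:ℝ)/((k:ℝ)+r)) • z k - ((k:ℝ)/((k:ℝ)+r)) • zs
              + ((r/((k:ℝ)+r)) • u k - (r/((k:ℝ)+r)) • zs)
              = ((k:ℝ)/((k:ℝ)+r)) • z k + (r/((k:ℝ)+r)) • u k
                - (((k:ℝ)/((k:ℝ)+r)) • zs + (r/((k:ℝ)+r)) • zs) by abel, h2]
        _ = _ := by abel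
    have hx1 : z (k+1) - zs = ((k:ℝ)/((k:ℝ)+r)) • (z k - zs)
        + (1 - (k:ℝ)/((k:ℝ)+r)) • (u k - zs) - (1/L) • (F (zh k) + Ct (k+1)) := by
      rw [hz1, ← hzt1]; abel
    have hy : zh k - zs = ((k:ℝ)/((k:ℝ)+r)) • (z k - zs)
        + (1 - (k:ℝ)/((k:ℝ)+r)) • (u k - zs)
        - (1/L) • (((k:ℝ)/((k:ℝ)+r)) • F (z k) + Ch k) := by
      rw [hzh1, ← hzt1]; abel
    have hu1 : u (k+1) - zs = (u k - zs) - (D/r) • (F (z (k+1)) + Ct (k+1)) := by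
      rw [hu k]; abel
    -- inner product hypotheses
    have hT1 : 0 ≤ ⟪F (z (k+1)) - F (z k), (z (k+1) - zs) - (z k - zs)⟫ := by
      rw [show (z (k+1) - zs) - (z k - zs) = z (k+1) - z k by abel]
      exact hmono _ _
    have hPh1 : 0 ≤ ⟪Ch k, (zh k - zs) - (z (k+1) - zs)⟫ := by
      have h1 := hChproj k (z (k+1)) (hzC k)
      rw [show (zh k - zs) - (z (k+1) - zs) = -(z (k+1) - zh k) by abel, inner_neg_right]
      linarith
    have hP1s : 0 ≤ ⟪Ct (k+1), z (k+1) - zs⟫ := by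
      have h1 := hCtproj k zs hzsC
      rw [show z (k+1) - zs = -(zs - z (k+1)) by abel, inner_neg_right]
      linarith
    have hP1k : 0 ≤ ⟪Ct (k+1), (z (k+1) - zs) - (z k - zs)⟫ := by
      have h1 := hCtproj k (z k) (hzAll k)
      rw [show (z (k+1) - zs) - (z k - zs) = -(z k - z (k+1)) by abel, inner_neg_right]
      linarith
    have hP0h : 0 ≤ ⟪Ct k, (z k - zs) - (zh k - zs)⟫ := by
      have h1 := hCtAll k (zh k) (hzhC k)
      rw [show (z k - zs) - (zh k - zs) = -(zh k - z k) by abel, inner_neg_right]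
      linarith
    have hZ1 : 0 ≤ ⟪F zs, z (k+1) - zs⟫ := hzs _ (hzC k)
    have hM1 : 0 ≤ ⟪F (z (k+1)) - F zs, z (k+1) - zs⟫ := hmono _ _
    have hq : ((k:ℝ)/((k:ℝ)+r)) • F (z k) + Ch k - F (zh k) - Ct (k+1)
        = L • (z (k+1) - zh k) := by
      rw [hCh k, hCt k]
      module
    have hQn : ‖F (z (k+1)) - F (zh k)‖
        ≤ ‖((k:ℝ)/((k:ℝ)+r)) • F (z k) + Ch k - F (zh k) - Ct (k+1)‖ := by
      rw [hq, norm_smul, Real.norm_eq_abs, abs_of_pos hL]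
      exact hLip _ _
    have core := descent_core (k:ℝ) r D L ((k:ℝ)/((k:ℝ)+r)) (1/L) (D/r) (r^2*(r-1)/(2*D))
      ha hr hL hD0 hal hla hde hga
      (z k - zs) (u k - zs) (z (k+1) - zs) (u (k+1) - zs) (zh k - zs)
      (F (z k)) (F (zh k)) (F (z (k+1))) (Ct k) (Ch k) (Ct (k+1)) (F zs)
      hx1 hy hu1 hT1 hPh1 hP1s hP1k hP0h hZ1 hM1 hQn
    have c1 : (((k:ℝ) + r)^2/(2*L)) * ‖Ch k - ((k:ℝ)/((k:ℝ) + r)) • Ct k‖^2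
        = (((k:ℝ) + r)^2*(1/L)/2) * ‖Ch k - ((k:ℝ)/((k:ℝ) + r)) • Ct k‖^2 := by ring
    have c2 : (1/2) * ((r - 1)/L - D) * (2*(k:ℝ) + r + 1) * ‖F (z (k+1)) + Ct (k+1)‖^2
        = (1/2) * ((r - 1)*(1/L) - D) * (2*(k:ℝ) + r + 1) * ‖F (z (k+1)) + Ct (k+1)‖^2 := by
      ring
    simp only [hVdef]
    push_cast
    linarith [core, c1, c2]
  -- telescoping sum
  have hsum : ∀ n : ℕ, (∑ k ∈ Finset.range n,
      ((1/2) * ((r - 1)/L - D) * (2*(k:ℝ) + r + 1) * ‖F (z (k+1)) + Ct (k+1)‖^2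
        + (((k:ℝ) + r)^2/(2*L)) * ‖Ch k - ((k:ℝ)/((k:ℝ) + r)) • Ct k‖^2)) + V n ≤ V 0 := by
    intro n
    induction n with
    | zero => simp
    | succ n ih =>
      rw [Finset.sum_range_succ]
      have h1 := descent n
      linarith
  have hVle : ∀ k : ℕ, V k ≤ V 0 := by
    intro k
    have h1 := hsum k
    have h2 : 0 ≤ ∑ kk ∈ Finset.range k,
        ((1/2) * ((r - 1)/L - D) * (2*(kk:ℝ) + r + 1) * ‖F (z (kk+1)) + Ct (kk+1)‖^2
        + (((kk:ℝ) + r)^2/(2*L)) * ‖Ch kk - ((kk:ℝ)/((kk:ℝ) + r)) • Ct kk‖^2) := by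
      apply Finset.sum_nonneg
      intro kk _
      have h3 : (0:ℝ) ≤ (1/2) * ((r - 1)/L - D) * (2*(kk:ℝ) + r + 1)
          * ‖F (z (kk+1)) + Ct (kk+1)‖^2 := by
        apply mul_nonneg (mul_nonneg (mul_nonneg (by norm_num) (by rw [sub_nonneg]; exact hD))
          (by positivity)) (sq_nonneg _)
      have h4 : (0:ℝ) ≤ (((kk:ℝ) + r)^2/(2*L)) * ‖Ch kk - ((kk:ℝ)/((kk:ℝ) + r)) • Ct kk‖^2 := by
        positivity
      linarith
    linarith
  -- item (i) auxiliary
  have item1 : ∀ k : ℕ, (1/(2*L) - D/(2*(r-1))) * (k:ℝ)^2 * ‖F (z k) + Ct k‖^2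
      ≤ (r^3 - r^2)/(2*D) * ‖z 0 - zs‖^2 := by
    intro k
    have h1 := hVlb k
    have h2 := hVle k
    have h3 : (0:ℝ) ≤ r*(k:ℝ) * ⟪F (z k) + Ct k, z k - zs⟫ :=
      mul_nonneg (mul_nonneg (le_of_lt hr0) (Nat.cast_nonneg k)) (hgzpos k)
    linarith [h1, h2, h3, hV0]
  -- item (ii) auxiliary
  have item2 : ∀ k : ℕ, r*(k:ℝ) * ⟪F (z k) + Ct k, z k - zs⟫
      ≤ (r^3 - r^2)/(2*D) * ‖z 0 - zs‖^2 := by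
    intro k
    have h1 := hVlb k
    have h2 := hVle k
    have h3 : (0:ℝ) ≤ (1/(2*L) - D/(2*(r-1))) * (k:ℝ)^2 * ‖F (z k) + Ct k‖^2 :=
      mul_nonneg (mul_nonneg hBnn (sq_nonneg _)) (sq_nonneg _)
    linarith [h1, h2, h3, hV0]
  refine ⟨fun k _ => item1 k, ?_, ?_, ?_, ?_⟩
  · -- item (ii)
    intro k _
    have h1 := item2 k
    have h2 := mul_le_mul_of_nonneg_left h1 (le_of_lt hD0)
    have h3 : D * ((r^3 - r^2)/(2*D) * ‖z 0 - zs‖^2) = (r^3 - r^2)/2 * ‖z 0 - zs‖^2 := by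
      field_simp
    calc D*r*(k:ℝ) * ⟪F (z k) + Ct k, z k - zs⟫
        = D * (r*(k:ℝ) * ⟪F (z k) + Ct k, z k - zs⟫) := by ring
      _ ≤ D * ((r^3 - r^2)/(2*D) * ‖z 0 - zs‖^2) := h2
      _ = (r^3 - r^2)/2 * ‖z 0 - zs‖^2 := h3
  · -- item (iii)
    intro n
    have h1 := hsum n
    have h2 := hVnn n
    have h3 : ∑ k ∈ Finset.range n,
        (1/2) * ((r - 1)/L - D) * (2*(k:ℝ) + r + 1) * ‖F (z (k+1)) + Ct (k+1)‖^2
        ≤ ∑ k ∈ Finset.range n,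
        ((1/2) * ((r - 1)/L - D) * (2*(k:ℝ) + r + 1) * ‖F (z (k+1)) + Ct (k+1)‖^2
        + (((k:ℝ) + r)^2/(2*L)) * ‖Ch k - ((k:ℝ)/((k:ℝ) + r)) • Ct k‖^2) := by
      apply Finset.sum_le_sum
      intro k _
      have : (0:ℝ) ≤ (((k:ℝ) + r)^2/(2*L)) * ‖Ch k - ((k:ℝ)/((k:ℝ) + r)) • Ct k‖^2 := by
        positivity
      linarith
    linarith [h1, h2, h3, hV0]
  · -- item (iv)
    intro n
    have h1 := hsum n
    have h2 := hVnn n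
    have h3 : ∑ k ∈ Finset.range n,
        (((k:ℝ) + r)^2/(2*L)) * ‖Ch k - ((k:ℝ)/((k:ℝ) + r)) • Ct k‖^2
        ≤ ∑ k ∈ Finset.range n,
        ((1/2) * ((r - 1)/L - D) * (2*(k:ℝ) + r + 1) * ‖F (z (k+1)) + Ct (k+1)‖^2
        + (((k:ℝ) + r)^2/(2*L)) * ‖Ch k - ((k:ℝ)/((k:ℝ) + r)) • Ct k‖^2) := by
      apply Finset.sum_le_sum
      intro k _
      have h4 : (0:ℝ) ≤ (1/2) * ((r - 1)/L - D) * (2*(k:ℝ) + r + 1)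
          * ‖F (z (k+1)) + Ct (k+1)‖^2 := by
        apply mul_nonneg (mul_nonneg (mul_nonneg (by norm_num) (by rw [sub_nonneg]; exact hD))
          (by positivity)) (sq_nonneg _)
      linarith
    linarith [h1, h2, h3, hV0]
  · -- item (v)
    intro hDlt k hk
    have hk1 : (1:ℝ) ≤ (k:ℝ) := by exact_mod_cast hk
    have hk0 : (0:ℝ) < (k:ℝ) := by linarith
    have hDLlt : D * L < r - 1 := (lt_div_iff₀ hL).mp hDlt
    constructor
    · -- gradient norm bound
      have h1 := item1 k
      have hden : (0:ℝ) < (((r - 1)/L) * D - D^2) * (k:ℝ)^2 := by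
        have : (0:ℝ) < (r-1)/L - D := by
          rw [sub_pos, lt_div_iff₀ hL]
          linarith [mul_comm D L]
        have h5 : ((r - 1)/L) * D - D^2 = D * ((r-1)/L - D) := by ring
        rw [h5]
        positivity
      rw [div_mul_eq_mul_div, le_div_iff₀ hden]
      have e1 : ‖F (z k) + Ct k‖^2 * ((((r - 1)/L) * D - D^2) * (k:ℝ)^2)
          = (2*D*(r-1)) * ((1/(2*L) - D/(2*(r-1))) * (k:ℝ)^2 * ‖F (z k) + Ct k‖^2) := by
        field_simp
      have e2 : (2*D*(r-1)) * ((r^3 - r^2)/(2*D) * ‖z 0 - zs‖^2)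
          = r^2*(r-1)^2 * ‖z 0 - zs‖^2 := by
        field_simp
      rw [e1, ← e2]
      apply mul_le_mul_of_nonneg_left h1
      positivity
    · -- inner product bound
      have h1 := item2 k
      rw [div_mul_eq_mul_div, le_div_iff₀ (by positivity : (0:ℝ) < 2*D*(k:ℝ))]
      have h6 : (⟪F (z k) + Ct k, z k - zs⟫ * (2*D*(k:ℝ))) * r
          ≤ ((r^2 - r) * ‖z 0 - zs‖^2) * r := by
        have e3 : (⟪F (z k) + Ct k, z k - zs⟫ * (2*D*(k:ℝ))) * r
            = 2*D*(r*(k:ℝ) * ⟪F (z k) + Ct k, z k - zs⟫) := by ring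
        have e4 : ((r^2 - r) * ‖z 0 - zs‖^2) * r
            = 2*D*((r^3 - r^2)/(2*D) * ‖z 0 - zs‖^2) := by
          field_simp
        rw [e3, e4]
        apply mul_le_mul_of_nonneg_left h1
        positivity
      exact le_of_mul_le_mul_right h6 hr0
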